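/- Consider the LEQR Riccati recursion for (A, B) producing (P_t, P̃_t, K_t), and the LEQR Riccati recursion with the same Q, Q_T, R, γ, T for estimated matrices (A′, B′) producing (P′_t, P̃′_t, K′_t), assuming I_n − γP′_{t+1} ≻ 0 for every t so both recursions are well defined. Assume R ⪰ I_m. Let Γ̃ ≥ 1 satisfy 1 − γΓ̃ > 0 and ‖A‖, ‖B‖, ‖Q‖, ‖Q_T‖, ‖R‖ ≤ Γ̃ − 1 and ‖P_t‖, ‖P̃_t‖, ‖K_{t−1}‖ ≤ Γ̃ − 1 for every t; set 𝓛 = 1/(1 − γΓ̃)² and 𝒱 = 2(𝓛 + 1)Γ̃³. Suppose ε > 0 satisfies ‖A′ − A‖ ≤ ε, ‖B′ − B‖ ≤ ε and (10𝒱²𝓛Γ̃⁴)^T ε ≤ 1. Then for every t = 0, 1, …, T−1: ‖K′_t − K_t‖ ≤ (10𝒱²𝓛Γ̃⁴)^{T−t−1}𝒱ε and ‖P′_t − P_t‖ ≤ (10𝒱²𝓛Γ̃⁴)^{T−t}ε. -/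

import Mathlib

open Matrix
open scoped Matrix.Norms.L2Operator

section Helpers
variable {k l p : ℕ}

lemma mnorm_one_le : ‖(1 : Matrix (Fin k) (Fin k) ℝ)‖ ≤ 1 := by
  rw [Matrix.cstar_norm_def, _root_.map_one]
  exact ContinuousLinearMap.norm_id_le

lemma mnorm_transpose (A : Matrix (Fin k) (Fin l) ℝ) : ‖Aᵀ‖ = ‖A‖ := by
  rw [← Matrix.conjTranspose_eq_transpose_of_trivial, Matrix.l2_opNorm_conjTranspose]

lemma mnorm_mul3 (A : Matrix (Fin k) (Fin l) ℝ) (B : Matrix (Fin l) (Fin l) ℝ)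
    (C : Matrix (Fin l) (Fin p) ℝ) : ‖A * B * C‖ ≤ ‖A‖ * ‖B‖ * ‖C‖ :=
  le_trans (Matrix.l2_opNorm_mul _ _)
    (mul_le_mul_of_nonneg_right (Matrix.l2_opNorm_mul _ _) (norm_nonneg _))

lemma posSemidef_smul {M : Matrix (Fin k) (Fin k) ℝ} (h : M.PosSemidef) {c : ℝ} (hc : 0 ≤ c) :
    (c • M).PosSemidef := by
  refine Matrix.PosSemidef.of_dotProduct_mulVec_nonneg ?_ (fun x => ?_)
  · simpa [Matrix.IsHermitian, Matrix.conjTranspose_smul] using congrArg (c • ·) h.1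
  · rw [Matrix.smul_mulVec, dotProduct_smul, smul_eq_mul]
    exact mul_nonneg hc (h.dotProduct_mulVec_nonneg x)

lemma neumann_inv_norm_le {X : Matrix (Fin k) (Fin k) ℝ} (hu : IsUnit (1 - X).det)
    (h : ‖X‖ < 1) : ‖(1 - X)⁻¹‖ ≤ (1 - ‖X‖)⁻¹ := by
  set Y := (1 - X)⁻¹ with hY
  have h1 : (1 - X) * Y = 1 := Matrix.mul_nonsing_inv _ hu
  have h2 : Y = 1 + X * Y := by
    have h' : Y - X * Y = 1 := by
      have := h1; rwa [sub_mul, one_mul] at this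
    rw [← h']; abel
  have h3 : ‖Y‖ ≤ 1 + ‖X‖ * ‖Y‖ := by
    calc ‖Y‖ = ‖(1 : Matrix (Fin k) (Fin k) ℝ) + X * Y‖ := by rw [← h2]
    _ ≤ ‖(1 : Matrix (Fin k) (Fin k) ℝ)‖ + ‖X * Y‖ := norm_add_le _ _
    _ ≤ 1 + ‖X‖ * ‖Y‖ := add_le_add mnorm_one_le (Matrix.l2_opNorm_mul _ _)
  have hx : 0 < 1 - ‖X‖ := by linarith
  have : ‖Y‖ * (1 - ‖X‖) ≤ 1 := by nlinarith [norm_nonneg Y]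
  calc ‖Y‖ = ‖Y‖ * (1 - ‖X‖) * (1 - ‖X‖)⁻¹ := by field_simp
  _ ≤ 1 * (1 - ‖X‖)⁻¹ := by
      exact mul_le_mul_of_nonneg_right this (by positivity)
  _ = (1 - ‖X‖)⁻¹ := one_mul _

end Helpers

section helper2
variable {k : ℕ}

lemma posdef_of_sub_one_psd {M : Matrix (Fin k) (Fin k) ℝ} (h : (M - 1).PosSemidef) :
    M.PosDef := by
  have := Matrix.PosDef.posSemidef_add h Matrix.PosDef.one
  simpa using this

lemma inv_norm_le_one {M : Matrix (Fin k) (Fin k) ℝ} (h : (M - 1).PosSemidef) : ‖M⁻¹‖ ≤ 1 := by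
  have hMpd : M.PosDef := posdef_of_sub_one_psd h
  have hdet : IsUnit M.det := (Matrix.isUnit_iff_isUnit_det _).mp hMpd.isUnit
  have hMM : ∀ z : Fin k → ℝ, M *ᵥ (M⁻¹ *ᵥ z) = z := by
    intro z; rw [Matrix.mulVec_mulVec, Matrix.mul_nonsing_inv _ hdet, Matrix.one_mulVec]
  have hq : ∀ z : Fin k → ℝ, z ⬝ᵥ z ≤ z ⬝ᵥ (M *ᵥ z) := by
    intro z
    have h2 := h.dotProduct_mulVec_nonneg z
    rw [Matrix.sub_mulVec, Matrix.one_mulVec, dotProduct_sub] at h2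
    simp only [star_trivial] at h2
    linarith
  rw [Matrix.cstar_norm_def]
  refine ContinuousLinearMap.opNorm_le_bound _ zero_le_one (fun x => ?_)
  rw [one_mul]
  set y : EuclideanSpace ℝ (Fin k) := toEuclideanCLM (𝕜 := ℝ) M⁻¹ x with hy
  have hinner : ∀ u v : EuclideanSpace ℝ (Fin k),
      (inner ℝ u v : ℝ) = (WithLp.equiv 2 _ u) ⬝ᵥ (WithLp.equiv 2 _ v) := by
    intro u v
    simp only [PiLp.inner_apply, RCLike.inner_apply, starRingEnd_apply, star_trivial, dotProduct]
    exact Finset.sum_congr rfl (fun i _ => mul_comm _ _)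
  have hy0 : WithLp.equiv 2 _ y = M⁻¹ *ᵥ (WithLp.equiv 2 _ x) := by
    rw [hy]; exact Matrix.ofLp_toEuclideanCLM _ _
  have key : ‖y‖ ^ 2 ≤ ‖y‖ * ‖x‖ := by
    have h1 : ‖y‖ ^ 2 = (inner ℝ y y : ℝ) := (real_inner_self_eq_norm_sq y).symm
    have h2 : (inner ℝ y x : ℝ) ≤ ‖y‖ * ‖x‖ := real_inner_le_norm y x
    rw [h1, hinner y y, hinner y x] at *
    calc (WithLp.equiv 2 _ y) ⬝ᵥ (WithLp.equiv 2 _ y)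
        ≤ (WithLp.equiv 2 _ y) ⬝ᵥ (M *ᵥ (WithLp.equiv 2 _ y)) := hq _
      _ = (WithLp.equiv 2 _ y) ⬝ᵥ (WithLp.equiv 2 _ x) := by rw [hy0, hMM]
      _ ≤ ‖y‖ * ‖x‖ := h2
  nlinarith [norm_nonneg y, norm_nonneg x]
end helper2

section helper3
variable {k : ℕ}

lemma inv_comm {X P : Matrix (Fin k) (Fin k) ℝ} (hdet : IsUnit X.det)
    (h : P * X = X * P) : P * X⁻¹ = X⁻¹ * P := by
  have h1 := Matrix.mul_nonsing_inv X hdet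
  have h2 := Matrix.nonsing_inv_mul X hdet
  calc P * X⁻¹ = X⁻¹ * X * (P * X⁻¹) := by rw [h2, one_mul]
    _ = X⁻¹ * (X * P) * X⁻¹ := by simp only [mul_assoc]
    _ = X⁻¹ * (P * X) * X⁻¹ := by rw [h]
    _ = X⁻¹ * P * (X * X⁻¹) := by simp only [mul_assoc]
    _ = X⁻¹ * P := by rw [h1, mul_one]

lemma smul_comm_basic (γ : ℝ) (P : Matrix (Fin k) (Fin k) ℝ) :
    P * (1 - γ • P) = (1 - γ • P) * P := by
  rw [mul_sub, sub_mul, mul_one, one_mul, mul_smul_comm, smul_mul_assoc]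

lemma ptil_eq {γ : ℝ} {Pm : Matrix (Fin k) (Fin k) ℝ} (hX : (1 - γ • Pm).PosDef) :
    Pm + γ • (Pm * (1 - γ • Pm)⁻¹ * Pm) = (1 - γ • Pm)⁻¹ * Pm := by
  set X := 1 - γ • Pm with hXdef
  have hdet : IsUnit X.det := (Matrix.isUnit_iff_isUnit_det _).mp hX.isUnit
  have hcomm : Pm * X = X * Pm := smul_comm_basic γ Pm
  have hcomm' : Pm * X⁻¹ = X⁻¹ * Pm := inv_comm hdet hcomm
  have h2 := Matrix.nonsing_inv_mul X hdet
  have hsum : X + γ • Pm = 1 := by rw [hXdef]; abel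
  symm
  calc X⁻¹ * Pm = X⁻¹ * ((X + γ • Pm) * Pm) := by rw [hsum, one_mul]
    _ = X⁻¹ * X * Pm + γ • (X⁻¹ * Pm * Pm) := by
        rw [add_mul, mul_add, smul_mul_assoc, mul_smul_comm]
        simp only [mul_assoc]
    _ = Pm + γ • (Pm * X⁻¹ * Pm) := by rw [h2, one_mul, hcomm']

lemma ptil_diff {γ : ℝ} {Pm Pm' : Matrix (Fin k) (Fin k) ℝ}
    (hX : (1 - γ • Pm).PosDef) (hX' : (1 - γ • Pm').PosDef) :
    (1 - γ • Pm')⁻¹ * Pm' - (1 - γ • Pm)⁻¹ * Pm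
      = (1 - γ • Pm')⁻¹ * (Pm' - Pm) * (1 - γ • Pm)⁻¹ := by
  set X := 1 - γ • Pm with hXdef
  set X' := 1 - γ • Pm' with hXdef'
  have hdet : IsUnit X.det := (Matrix.isUnit_iff_isUnit_det _).mp hX.isUnit
  have hdet' : IsUnit X'.det := (Matrix.isUnit_iff_isUnit_det _).mp hX'.isUnit
  have hcomm' : Pm * X⁻¹ = X⁻¹ * Pm := inv_comm hdet (smul_comm_basic γ Pm)
  have e1 : Pm' * X - X' * Pm = Pm' - Pm := by
    rw [hXdef, hXdef', mul_sub, sub_mul, mul_one, one_mul, mul_smul_comm, smul_mul_assoc]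
    abel
  have e2 : X'⁻¹ * (Pm' * X) * X⁻¹ = X'⁻¹ * Pm' := by
    calc X'⁻¹ * (Pm' * X) * X⁻¹ = X'⁻¹ * Pm' * (X * X⁻¹) := by simp only [mul_assoc]
      _ = X'⁻¹ * Pm' := by rw [Matrix.mul_nonsing_inv X hdet, mul_one]
  have e3 : X'⁻¹ * (X' * Pm) * X⁻¹ = X⁻¹ * Pm := by
    calc X'⁻¹ * (X' * Pm) * X⁻¹ = X'⁻¹ * X' * (Pm * X⁻¹) := by simp only [mul_assoc]
      _ = X⁻¹ * Pm := by rw [Matrix.nonsing_inv_mul X' hdet', one_mul, hcomm']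
  calc X'⁻¹ * Pm' - X⁻¹ * Pm = X'⁻¹ * (Pm' * X) * X⁻¹ - X'⁻¹ * (X' * Pm) * X⁻¹ := by
        rw [e2, e3]
    _ = X'⁻¹ * (Pm' * X - X' * Pm) * X⁻¹ := by
        have e4 : ∀ a b : Matrix (Fin k) (Fin k) ℝ,
            X'⁻¹ * (a - b) * X⁻¹ = X'⁻¹ * a * X⁻¹ - X'⁻¹ * b * X⁻¹ := fun a b => by
          rw [mul_sub, sub_mul]
        rw [e4]
    _ = X'⁻¹ * (Pm' - Pm) * X⁻¹ := by rw [e1]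

lemma ptil_psd {γ : ℝ} (hγ : 0 ≤ γ) {Pm : Matrix (Fin k) (Fin k) ℝ}
    (hPm : Pm.PosSemidef) (hX : (1 - γ • Pm).PosDef) :
    (Pm + γ • (Pm * (1 - γ • Pm)⁻¹ * Pm)).PosSemidef := by
  refine hPm.add (posSemidef_smul ?_ hγ)
  have := (hX.inv.posSemidef).conjTranspose_mul_mul_same Pm
  rwa [hPm.1.eq] at this

end helper3

section helper4
variable {k l p : ℕ}

lemma psd_conj {A : Matrix (Fin k) (Fin k) ℝ} (hA : A.PosSemidef)
    (B : Matrix (Fin k) (Fin l) ℝ) : (Bᵀ * A * B).PosSemidef := by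
  have := hA.conjTranspose_mul_mul_same B
  rwa [Matrix.conjTranspose_eq_transpose_of_trivial] at this

lemma mnorm_mul3_le {A : Matrix (Fin k) (Fin l) ℝ} {B : Matrix (Fin l) (Fin l) ℝ}
    {C : Matrix (Fin l) (Fin p) ℝ} {a b c : ℝ} (hA : ‖A‖ ≤ a) (hB : ‖B‖ ≤ b) (hC : ‖C‖ ≤ c)
    (ha : 0 ≤ a) (hb : 0 ≤ b) : ‖A * B * C‖ ≤ a * b * c :=
  le_trans (mnorm_mul3 A B C)
    (mul_le_mul (mul_le_mul hA hB (norm_nonneg _) ha) hC (norm_nonneg _) (mul_nonneg ha hb))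

lemma res_norm {γ Γ : ℝ} {Pm : Matrix (Fin k) (Fin k) ℝ} (hγ : 0 < γ) (hγΓ : 0 < 1 - γ * Γ)
    (hX : (1 - γ • Pm).PosDef) (hn : ‖Pm‖ ≤ Γ) : ‖(1 - γ • Pm)⁻¹‖ ≤ (1 - γ * Γ)⁻¹ := by
  have h1 : ‖γ • Pm‖ = γ * ‖Pm‖ := by
    rw [norm_smul, Real.norm_eq_abs, abs_of_pos hγ]
  have h2 : ‖γ • Pm‖ ≤ γ * Γ := by
    rw [h1]; exact mul_le_mul_of_nonneg_left hn hγ.le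
  have h3 : ‖γ • Pm‖ < 1 := lt_of_le_of_lt h2 (by linarith)
  have := neumann_inv_norm_le ((Matrix.isUnit_iff_isUnit_det _).mp hX.isUnit) h3
  refine le_trans this ?_
  have hpos : 0 < 1 - ‖γ • Pm‖ := by linarith
  exact inv_anti₀ hγΓ (by linarith)

lemma k_diff_identity {M M' : Matrix (Fin k) (Fin k) ℝ} {N N' : Matrix (Fin k) (Fin l) ℝ}
    (hdet : IsUnit M.det) (hdet' : IsUnit M'.det) :
    -(M'⁻¹ * N') - -(M⁻¹ * N)
      = -(M'⁻¹ * (N' - N)) + M'⁻¹ * (M - M') * -(M⁻¹ * N) := by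
  have h1 := Matrix.mul_nonsing_inv M hdet
  have h2 := Matrix.nonsing_inv_mul M' hdet'
  have e1 : M'⁻¹ * (M - M') * (M⁻¹ * N) = M'⁻¹ * N - M⁻¹ * N := by
    calc M'⁻¹ * (M - M') * (M⁻¹ * N) = (M'⁻¹ * M - M'⁻¹ * M') * (M⁻¹ * N) := by
          rw [Matrix.mul_sub]
      _ = M'⁻¹ * M * (M⁻¹ * N) - M'⁻¹ * M' * (M⁻¹ * N) := by rw [Matrix.sub_mul]
      _ = M'⁻¹ * (M * M⁻¹ * N) - (M'⁻¹ * M') * (M⁻¹ * N) := by simp only [Matrix.mul_assoc]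
      _ = M'⁻¹ * N - M⁻¹ * N := by rw [h1, h2, Matrix.one_mul, Matrix.one_mul]
  have e2 : M'⁻¹ * (N' - N) = M'⁻¹ * N' - M'⁻¹ * N := by rw [Matrix.mul_sub]
  rw [Matrix.mul_neg, e1, e2]
  abel

lemma triple_diff (B B' : Matrix (Fin k) (Fin l) ℝ) (Pt Pt' : Matrix (Fin k) (Fin k) ℝ)
    (A A' : Matrix (Fin k) (Fin p) ℝ) :
    B'ᵀ * Pt' * A' - Bᵀ * Pt * A
      = (B' - B)ᵀ * Pt' * A' + Bᵀ * (Pt' - Pt) * A' + Bᵀ * Pt * (A' - A) := by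
  rw [Matrix.transpose_sub, Matrix.sub_mul, Matrix.sub_mul, Matrix.mul_sub, Matrix.sub_mul,
    Matrix.mul_sub]
  abel

end helper4


section Scalars

private lemma mul3_le {a b c a' b' c' : ℝ} (ha : 0 ≤ a) (hb : 0 ≤ b) (hc : 0 ≤ c)
    (h1 : a ≤ a') (h2 : b ≤ b') (h3 : c ≤ c') : a * b * c ≤ a' * b' * c' := by
  have ha' : 0 ≤ a' := le_trans ha h1
  have hb' : 0 ≤ b' := le_trans hb h2
  exact mul_le_mul (mul_le_mul h1 h2 hb ha') h3 hc (mul_nonneg ha' hb')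

private lemma factor_le {A u v x y : ℝ} (hx : x = A * u) (hy : y = A * v) (hA : 0 ≤ A)
    (huv : u ≤ v) : x ≤ y := by
  rw [hx, hy]; exact mul_le_mul_of_nonneg_left huv hA

variable {Γ L V d : ℝ}

lemma scalar_S1 (hΓ : 1 ≤ Γ) (hL : 1 ≤ L) (hd : 0 < d) (hd1 : d ≤ 1) :
    d * ((Γ - 1) + L * d) * Γ + (Γ - 1) * (L * d) * Γ + (Γ - 1) * (Γ - 1) * d
      ≤ (2 * (Γ - 1) * Γ + L * Γ ^ 2) * d := by
  nlinarith [mul_nonneg (mul_nonneg hd.le (sub_nonneg.2 hd1))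
      (mul_nonneg (by linarith : (0:ℝ) ≤ L) (by linarith : (0:ℝ) ≤ Γ)),
    mul_nonneg hd.le (mul_nonneg (by linarith : (0:ℝ) ≤ Γ - 1) (by linarith : (0:ℝ) ≤ 1))]

lemma scalar_S2 (hΓ : 1 ≤ Γ) (hL : 1 ≤ L) (hd : 0 < d) :
    1 * ((2 * (Γ - 1) * Γ + L * Γ ^ 2) * d) + 1 * ((2 * (Γ - 1) * Γ + L * Γ ^ 2) * d) * (Γ - 1)
      ≤ (L + 2) * Γ ^ 3 * d := by
  nlinarith [mul_nonneg hd.le (mul_nonneg (by positivity : (0:ℝ) ≤ Γ^2)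
      (by linarith : (0:ℝ) ≤ Γ - 1)), sq_nonneg (Γ - 1),
    mul_nonneg hd.le (mul_nonneg (by linarith : (0:ℝ) ≤ Γ - 1) (sq_nonneg (Γ - 1)))]

section facts
variable (hΓ : 1 ≤ Γ) (hL : 1 ≤ L) (hV : V = 2 * (L + 1) * Γ ^ 3)
include hΓ hL hV

lemma fact_V1 : 1 ≤ V := by
  have h3 : (1:ℝ) ≤ Γ ^ 3 := one_le_pow₀ hΓ
  rw [hV]; nlinarith

lemma fact_ΓV : Γ ≤ V := by
  have hΓ0 : (0:ℝ) < Γ := by linarith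
  have h1 : Γ ≤ Γ ^ 3 := by nlinarith [mul_nonneg (mul_nonneg hΓ0.le (by linarith : (0:ℝ) ≤ Γ - 1)) (by linarith : (0:ℝ) ≤ Γ + 1)]
  have h2 : Γ ^ 3 ≤ 2 * (L + 1) * Γ ^ 3 := by nlinarith [pow_pos hΓ0 3]
  rw [hV]; linarith

lemma fact_κV : (L + 2) * Γ ^ 3 ≤ V := by
  have hΓ0 : (0:ℝ) < Γ := by linarith
  rw [hV]
  exact mul_le_mul_of_nonneg_right (by linarith) (by positivity)

end facts

lemma scalar_S2b (hΓ : 1 ≤ Γ) (hL : 1 ≤ L) (hV : V = 2 * (L + 1) * Γ ^ 3) (hd : 0 < d) :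
    (L + 2) * Γ ^ 3 * d ≤ V * d :=
  mul_le_mul_of_nonneg_right (fact_κV hΓ hL hV) hd.le

lemma scalar_S3 (hΓ : 1 ≤ Γ) (hL : 1 ≤ L) (hV : V = 2 * (L + 1) * Γ ^ 3)
    (hd : 0 < d) (hd1 : d ≤ 1) :
    d + d * ((Γ - 1) + (L + 2) * Γ ^ 3 * d) + (Γ - 1) * ((L + 2) * Γ ^ 3 * d)
      ≤ V * Γ * d := by
  subst hV
  have hΓ0 : (0:ℝ) < Γ := by linarith
  have h3 : (1:ℝ) ≤ Γ ^ 3 := one_le_pow₀ hΓ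
  have hLΓ3 : (1:ℝ) ≤ L * Γ ^ 3 := by nlinarith
  have hLΓ4 : (1:ℝ) ≤ L * Γ ^ 3 * Γ := by nlinarith
  nlinarith [mul_nonneg (mul_nonneg hd.le (sub_nonneg.2 hd1)) (by positivity : (0:ℝ) ≤ (L+2)*Γ^3),
    mul_nonneg hd.le (mul_nonneg (mul_nonneg (by linarith : (0:ℝ) ≤ L)
      (by positivity : (0:ℝ) ≤ Γ^3)) (by linarith : (0:ℝ) ≤ Γ - 1)),
    mul_nonneg hd.le (by linarith : (0:ℝ) ≤ L * Γ ^ 3 * Γ - 1)]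

lemma scalar_S4 (hΓ : 1 ≤ Γ) (hL : 1 ≤ L) (hV : V = 2 * (L + 1) * Γ ^ 3)
    (hd : 0 < d) (hd1 : d ≤ 1) :
    Γ ^ 2 + V * Γ * d ≤ 2 * V * Γ := by
  have hΓ0 : (0:ℝ) < Γ := by linarith
  have hV0 : (0:ℝ) < V := by rw [hV]; positivity
  have h1 : V * Γ * d ≤ V * Γ := mul_le_of_le_one_right (by positivity) hd1
  have h2 : Γ ^ 2 ≤ V * Γ := by
    have := fact_ΓV hΓ hL hV
    nlinarith
  linarith

lemma scalar_S0 (hΓ : 1 ≤ Γ) : (Γ - 1) + (Γ - 1) * (Γ - 1) ≤ Γ ^ 2 := by nlinarith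

set_option maxHeartbeats 1000000 in
lemma scalar_S5 (hΓ : 1 ≤ Γ) (hL : 1 ≤ L) (hV : V = 2 * (L + 1) * Γ ^ 3)
    (hd : 0 < d) (hd1 : d ≤ 1) :
    ((L + 2) * Γ ^ 3 * d) * (Γ - 1) * ((Γ - 1) + (L + 2) * Γ ^ 3 * d)
      + (Γ - 1) * (Γ - 1) * ((L + 2) * Γ ^ 3 * d)
      + (V * Γ * d) * ((Γ - 1) + L * d) * (2 * V * Γ)
      + Γ ^ 2 * (L * d) * (2 * V * Γ)
      + Γ ^ 2 * (Γ - 1) * (V * Γ * d) ≤ 10 * V ^ 2 * L * Γ ^ 4 * d := by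
  have hΓ0 : (0:ℝ) < Γ := by linarith
  have hL0 : (0:ℝ) < L := by linarith
  have hV0 : (0:ℝ) < V := by rw [hV]; positivity
  have hV1 : (1:ℝ) ≤ V := fact_V1 hΓ hL hV
  have hΓ3 : (1:ℝ) ≤ Γ ^ 3 := one_le_pow₀ hΓ
  have hΓ4 : (1:ℝ) ≤ Γ ^ 4 := one_le_pow₀ hΓ
  have hκV : (L + 2) * Γ ^ 3 ≤ V := fact_κV hΓ hL hV
  have hΓV : Γ ≤ V := fact_ΓV hΓ hL hV
  have hκ0 : (0:ℝ) ≤ (L + 2) * Γ ^ 3 * d := by positivity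
  have hκd : (L + 2) * Γ ^ 3 * d ≤ V * d := mul_le_mul_of_nonneg_right hκV hd.le
  have hκdV : (L + 2) * Γ ^ 3 * d ≤ V := le_trans hκd (by nlinarith)
  have hgL : (Γ - 1) + L * d ≤ L * Γ := by nlinarith
  have c1 : ((L + 2) * Γ ^ 3 * d) * (Γ - 1) * ((Γ - 1) + (L + 2) * Γ ^ 3 * d)
      ≤ (V * d) * Γ * (2 * V) :=
    mul3_le hκ0 (by linarith) (by linarith) hκd (by linarith) (by linarith)
  have c2 : (Γ - 1) * (Γ - 1) * ((L + 2) * Γ ^ 3 * d) ≤ Γ * Γ * (V * d) :=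
    mul3_le (by linarith) (by linarith) hκ0 (by linarith) (by linarith) hκd
  have c3 : (V * Γ * d) * ((Γ - 1) + L * d) * (2 * V * Γ) ≤ (V * Γ * d) * (L * Γ) * (2 * V * Γ) :=
    mul3_le (by positivity) (by nlinarith) (by positivity) le_rfl hgL le_rfl
  have c5 : Γ ^ 2 * (Γ - 1) * (V * Γ * d) ≤ Γ ^ 2 * Γ * (V * Γ * d) :=
    mul3_le (by positivity) (by linarith) (by positivity) le_rfl (by linarith) le_rfl
  -- each bound vs 2 V² L Γ⁴ d
  have hΓle4 : Γ ≤ L * Γ ^ 4 := by nlinarith [mul_nonneg hΓ0.le (by linarith : (0:ℝ) ≤ Γ^3 - 1)]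
  have e1 : (V * d) * Γ * (2 * V) ≤ 2 * V ^ 2 * L * Γ ^ 4 * d :=
    factor_le (by ring) (by ring) (by positivity : (0:ℝ) ≤ 2 * V ^ 2 * d) hΓle4
  have e2 : Γ * Γ * (V * d) ≤ 2 * V ^ 2 * L * Γ ^ 4 * d := by
    refine factor_le (A := V * d * Γ ^ 2) (by ring) (by ring) (by positivity)
      (?_ : 1 ≤ 2 * V * L * Γ ^ 2)
    nlinarith
  have e3 : (V * Γ * d) * (L * Γ) * (2 * V * Γ) ≤ 2 * V ^ 2 * L * Γ ^ 4 * d := by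
    refine factor_le (A := 2 * V ^ 2 * L * d) (by ring) (by ring) (by positivity)
      (?_ : Γ ^ 3 ≤ Γ ^ 4)
    nlinarith [mul_nonneg (by positivity : (0:ℝ) ≤ Γ^3) (by linarith : (0:ℝ) ≤ Γ - 1)]
  have e4 : Γ ^ 2 * (L * d) * (2 * V * Γ) ≤ 2 * V ^ 2 * L * Γ ^ 4 * d := by
    refine factor_le (A := 2 * V * L * d * Γ ^ 3) (by ring) (by ring) (by positivity)
      (?_ : 1 ≤ V * Γ)
    nlinarith
  have e5 : Γ ^ 2 * Γ * (V * Γ * d) ≤ 2 * V ^ 2 * L * Γ ^ 4 * d := by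
    refine factor_le (A := V * Γ ^ 4 * d) (by ring) (by ring) (by positivity)
      (?_ : 1 ≤ 2 * V * L)
    nlinarith
  linarith

end Scalars


private lemma norm_add_diff_le {k l : ℕ} {x a : Matrix (Fin k) (Fin l) ℝ} {ca cd : ℝ}
    (h1 : ‖a‖ ≤ ca) (h2 : ‖x - a‖ ≤ cd) : ‖x‖ ≤ ca + cd := by
  calc ‖x‖ = ‖a + (x - a)‖ := by rw [show a + (x - a) = x from by abel]
    _ ≤ ‖a‖ + ‖x - a‖ := norm_add_le _ _
    _ ≤ ca + cd := add_le_add h1 h2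

set_option maxHeartbeats 2000000 in
/-- Multi-step perturbation bounds for the LEQR Riccati recursion
(Lemma 7 of the paper). -/
theorem leqr_riccati_perturbation {n m : ℕ} (T : ℕ) (hT : 1 ≤ T)
    (γ Γ ε : ℝ)
    (A A' : Matrix (Fin n) (Fin n) ℝ) (B B' : Matrix (Fin n) (Fin m) ℝ)
    (Q QT : Matrix (Fin n) (Fin n) ℝ) (R : Matrix (Fin m) (Fin m) ℝ)
    (hγ : 0 < γ) (hQ : Q.PosSemidef) (hQT : QT.PosSemidef) (hRpd : R.PosDef)
    (hR : (R - 1).PosSemidef)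
    -- the LEQR Riccati recursion for (A, B)
    (P Ptil : ℕ → Matrix (Fin n) (Fin n) ℝ) (K : ℕ → Matrix (Fin m) (Fin n) ℝ)
    (hPT : P T = QT)
    (hwf : ∀ t < T, (1 - γ • P (t + 1)).PosDef)
    (hPtil : ∀ t < T,
      Ptil (t + 1) = P (t + 1) + γ • (P (t + 1) * (1 - γ • P (t + 1))⁻¹ * P (t + 1)))
    (hK : ∀ t < T, K t = -((Bᵀ * Ptil (t + 1) * B + R)⁻¹ * (Bᵀ * Ptil (t + 1) * A)))
    (hP : ∀ t < T,
      P t = Q + (K t)ᵀ * R * K t + (A + B * K t)ᵀ * Ptil (t + 1) * (A + B * K t))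
    -- the LEQR Riccati recursion for the estimated matrices (A', B')
    (P' Ptil' : ℕ → Matrix (Fin n) (Fin n) ℝ) (K' : ℕ → Matrix (Fin m) (Fin n) ℝ)
    (hPT' : P' T = QT)
    (hwf' : ∀ t < T, (1 - γ • P' (t + 1)).PosDef)
    (hPtil' : ∀ t < T,
      Ptil' (t + 1) = P' (t + 1) + γ • (P' (t + 1) * (1 - γ • P' (t + 1))⁻¹ * P' (t + 1)))
    (hK' : ∀ t < T, K' t = -((B'ᵀ * Ptil' (t + 1) * B' + R)⁻¹ * (B'ᵀ * Ptil' (t + 1) * A')))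
    (hP' : ∀ t < T,
      P' t = Q + (K' t)ᵀ * R * K' t + (A' + B' * K' t)ᵀ * Ptil' (t + 1) * (A' + B' * K' t))
    -- uniform norm bounds
    (hΓ : 1 ≤ Γ) (hγΓ : 0 < 1 - γ * Γ)
    (hAn : ‖A‖ ≤ Γ - 1) (hBn : ‖B‖ ≤ Γ - 1) (hQn : ‖Q‖ ≤ Γ - 1) (hQTn : ‖QT‖ ≤ Γ - 1)
    (hRn : ‖R‖ ≤ Γ - 1)
    (hPn : ∀ t ≤ T, ‖P t‖ ≤ Γ - 1)
    (hPtiln : ∀ t, 1 ≤ t → t ≤ T → ‖Ptil t‖ ≤ Γ - 1)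
    (hKn : ∀ t < T, ‖K t‖ ≤ Γ - 1)
    -- constants
    (L V : ℝ) (hLdef : L = 1 / (1 - γ * Γ) ^ 2) (hVdef : V = 2 * (L + 1) * Γ ^ 3)
    -- perturbation size
    (hε : 0 < ε) (hAdiff : ‖A' - A‖ ≤ ε) (hBdiff : ‖B' - B‖ ≤ ε)
    (hsmall : (10 * V ^ 2 * L * Γ ^ 4) ^ T * ε ≤ 1) :
    ∀ t < T,
      ‖K' t - K t‖ ≤ (10 * V ^ 2 * L * Γ ^ 4) ^ (T - t - 1) * V * ε ∧
      ‖P' t - P t‖ ≤ (10 * V ^ 2 * L * Γ ^ 4) ^ (T - t) * ε := by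
  
  -- scalar preliminaries
  have hΓ0 : (0 : ℝ) < Γ := by linarith
  have hg0 : (0 : ℝ) ≤ Γ - 1 := by linarith
  have hL1 : (1 : ℝ) ≤ L := by
    rw [hLdef, le_div_iff₀ (by positivity : (0:ℝ) < (1 - γ * Γ) ^ 2)]
    nlinarith [mul_pos hγ hΓ0]
  have hL0 : (0 : ℝ) < L := by linarith
  have hL' : L = ((1 - γ * Γ)⁻¹) ^ 2 := by rw [hLdef, one_div, ← inv_pow]
  have hV1 : (1 : ℝ) ≤ V := fact_V1 hΓ hL1 hVdef
  have hcpos : (0 : ℝ) < (1 - γ * Γ)⁻¹ := by positivity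
  have hC1 : (1 : ℝ) ≤ 10 * V ^ 2 * L * Γ ^ 4 := by
    nlinarith [one_le_pow₀ hV1 (n := 2), one_le_pow₀ hΓ (n := 4),
      mul_le_mul (one_le_pow₀ hV1 (n := 2)) hL1 zero_le_one (by positivity),
      mul_le_mul (mul_le_mul (one_le_pow₀ hV1 (n := 2)) hL1 zero_le_one (by positivity))
        (one_le_pow₀ hΓ (n := 4)) zero_le_one
        (by positivity : (0:ℝ) ≤ V ^ 2 * L)]
  have hε1 : ε ≤ 1 := by
    have h1 : (1 : ℝ) ≤ (10 * V ^ 2 * L * Γ ^ 4) ^ T := one_le_pow₀ hC1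
    nlinarith
  -- the one-step perturbation bound
  have step : ∀ t < T, ∀ d : ℝ, ε ≤ d → d ≤ 1 →
      (P (t + 1)).PosSemidef → (P' (t + 1)).PosSemidef →
      ‖P' (t + 1) - P (t + 1)‖ ≤ d →
      (P t).PosSemidef ∧ (P' t).PosSemidef ∧ ‖K' t - K t‖ ≤ V * d ∧
        ‖P' t - P t‖ ≤ (10 * V ^ 2 * L * Γ ^ 4) * d := by
    intro t ht d hεd hd1 hp hp' hdiff
    have hd0 : (0 : ℝ) < d := lt_of_lt_of_le hε hεd
    have hwt := hwf t ht
    have hwt' := hwf' t ht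
    -- norms at t+1
    have hPmn : ‖P (t + 1)‖ ≤ Γ - 1 := hPn (t + 1) (by omega)
    have hPm'n : ‖P' (t + 1)‖ ≤ Γ := by
      have := norm_add_diff_le hPmn hdiff
      linarith
    -- Ptil facts
    have hTeq : Ptil (t + 1) = (1 - γ • P (t + 1))⁻¹ * P (t + 1) := by
      rw [hPtil t ht, ptil_eq hwt]
    have hTeq' : Ptil' (t + 1) = (1 - γ • P' (t + 1))⁻¹ * P' (t + 1) := by
      rw [hPtil' t ht, ptil_eq hwt']
    have hTpsd : (Ptil (t + 1)).PosSemidef := by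
      rw [hPtil t ht]; exact ptil_psd hγ.le hp hwt
    have hTpsd' : (Ptil' (t + 1)).PosSemidef := by
      rw [hPtil' t ht]; exact ptil_psd hγ.le hp' hwt'
    have hXn : ‖(1 - γ • P (t + 1))⁻¹‖ ≤ (1 - γ * Γ)⁻¹ :=
      res_norm hγ hγΓ hwt (by linarith)
    have hXn' : ‖(1 - γ • P' (t + 1))⁻¹‖ ≤ (1 - γ * Γ)⁻¹ :=
      res_norm hγ hγΓ hwt' hPm'n
    have hTdiff : ‖Ptil' (t + 1) - Ptil (t + 1)‖ ≤ L * d := by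
      rw [hTeq, hTeq', ptil_diff hwt hwt']
      refine le_trans (mnorm_mul3_le hXn' hdiff hXn hcpos.le hd0.le) (le_of_eq ?_)
      rw [hL']; ring
    have hTn : ‖Ptil (t + 1)‖ ≤ Γ - 1 := hPtiln (t + 1) (by omega) (by omega)
    have hTn' : ‖Ptil' (t + 1)‖ ≤ (Γ - 1) + L * d := norm_add_diff_le hTn hTdiff
    have hLd0 : (0 : ℝ) ≤ L * d := by positivity
    have hTn'0 : (0 : ℝ) ≤ (Γ - 1) + L * d := by linarith
    -- primed norms
    have hA'n : ‖A'‖ ≤ Γ := by have := norm_add_diff_le hAn hAdiff; linarith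
    have hB'n : ‖B'‖ ≤ Γ := by have := norm_add_diff_le hBn hBdiff; linarith
    -- the M matrices are ⪰ 1
    have hM1 : (Bᵀ * Ptil (t + 1) * B + R - 1).PosSemidef := by
      rw [show Bᵀ * Ptil (t + 1) * B + R - 1 = Bᵀ * Ptil (t + 1) * B + (R - 1) from by abel]
      exact (psd_conj hTpsd B).add hR
    have hM1' : (B'ᵀ * Ptil' (t + 1) * B' + R - 1).PosSemidef := by
      rw [show B'ᵀ * Ptil' (t + 1) * B' + R - 1 = B'ᵀ * Ptil' (t + 1) * B' + (R - 1) from by abel]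
      exact (psd_conj hTpsd' B').add hR
    have hMdet : IsUnit (Bᵀ * Ptil (t + 1) * B + R).det :=
      (Matrix.isUnit_iff_isUnit_det _).mp (posdef_of_sub_one_psd hM1).isUnit
    have hMdet' : IsUnit (B'ᵀ * Ptil' (t + 1) * B' + R).det :=
      (Matrix.isUnit_iff_isUnit_det _).mp (posdef_of_sub_one_psd hM1').isUnit
    have hMinv' : ‖(B'ᵀ * Ptil' (t + 1) * B' + R)⁻¹‖ ≤ 1 := inv_norm_le_one hM1'
    -- generic bound for differences of triple products
    have key3 : ∀ {p : ℕ} (Y Y' : Matrix (Fin n) (Fin p) ℝ), ‖Y‖ ≤ Γ - 1 → ‖Y'‖ ≤ Γ →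
        ‖Y' - Y‖ ≤ d →
        ‖B'ᵀ * Ptil' (t + 1) * Y' - Bᵀ * Ptil (t + 1) * Y‖
          ≤ (2 * (Γ - 1) * Γ + L * Γ ^ 2) * d := by
      intro p Y Y' hY hY' hYd
      rw [triple_diff]
      have t1 : ‖(B' - B)ᵀ * Ptil' (t + 1) * Y'‖ ≤ d * ((Γ - 1) + L * d) * Γ :=
        mnorm_mul3_le (by rw [mnorm_transpose]; exact le_trans hBdiff hεd) hTn' hY'
          hd0.le hTn'0
      have t2 : ‖Bᵀ * (Ptil' (t + 1) - Ptil (t + 1)) * Y'‖ ≤ (Γ - 1) * (L * d) * Γ :=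
        mnorm_mul3_le (by rw [mnorm_transpose]; exact hBn) hTdiff hY' hg0 hLd0
      have t3 : ‖Bᵀ * Ptil (t + 1) * (Y' - Y)‖ ≤ (Γ - 1) * (Γ - 1) * d :=
        mnorm_mul3_le (by rw [mnorm_transpose]; exact hBn) hTn hYd hg0 hg0
      refine le_trans (le_trans (norm_add_le _ _) (add_le_add (norm_add_le _ _) le_rfl)) ?_
      have := scalar_S1 hΓ hL1 hd0 hd1
      linarith
    have hNdiff : ‖B'ᵀ * Ptil' (t + 1) * A' - Bᵀ * Ptil (t + 1) * A‖
        ≤ (2 * (Γ - 1) * Γ + L * Γ ^ 2) * d := key3 A A' hAn hA'n (le_trans hAdiff hεd)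
    have hMdiffRaw : ‖B'ᵀ * Ptil' (t + 1) * B' - Bᵀ * Ptil (t + 1) * B‖
        ≤ (2 * (Γ - 1) * Γ + L * Γ ^ 2) * d := key3 B B' hBn hB'n (le_trans hBdiff hεd)
    have hMdiff : ‖Bᵀ * Ptil (t + 1) * B + R - (B'ᵀ * Ptil' (t + 1) * B' + R)‖
        ≤ (2 * (Γ - 1) * Γ + L * Γ ^ 2) * d := by
      rw [norm_sub_rev, show B'ᵀ * Ptil' (t + 1) * B' + R - (Bᵀ * Ptil (t + 1) * B + R)
        = B'ᵀ * Ptil' (t + 1) * B' - Bᵀ * Ptil (t + 1) * B from by abel]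
      exact hMdiffRaw
    -- K difference
    have hKid : K' t - K t
        = -((B'ᵀ * Ptil' (t + 1) * B' + R)⁻¹
            * (B'ᵀ * Ptil' (t + 1) * A' - Bᵀ * Ptil (t + 1) * A))
          + (B'ᵀ * Ptil' (t + 1) * B' + R)⁻¹
            * (Bᵀ * Ptil (t + 1) * B + R - (B'ᵀ * Ptil' (t + 1) * B' + R)) * K t := by
      rw [hK t ht, hK' t ht]
      exact k_diff_identity hMdet hMdet'
    have hNb0 : (0 : ℝ) ≤ (2 * (Γ - 1) * Γ + L * Γ ^ 2) * d := by
      have : (0:ℝ) ≤ 2 * (Γ - 1) * Γ := by positivity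
      have : (0:ℝ) < L * Γ ^ 2 := by positivity
      positivity
    have hKb : ‖K' t - K t‖ ≤ (L + 2) * Γ ^ 3 * d := by
      rw [hKid]
      refine le_trans (norm_add_le _ _) ?_
      rw [norm_neg]
      have u1 : ‖(B'ᵀ * Ptil' (t + 1) * B' + R)⁻¹
          * (B'ᵀ * Ptil' (t + 1) * A' - Bᵀ * Ptil (t + 1) * A)‖
          ≤ 1 * ((2 * (Γ - 1) * Γ + L * Γ ^ 2) * d) :=
        le_trans (Matrix.l2_opNorm_mul _ _)
          (mul_le_mul hMinv' hNdiff (norm_nonneg _) zero_le_one)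
      have u2 : ‖(B'ᵀ * Ptil' (t + 1) * B' + R)⁻¹
          * (Bᵀ * Ptil (t + 1) * B + R - (B'ᵀ * Ptil' (t + 1) * B' + R)) * K t‖
          ≤ 1 * ((2 * (Γ - 1) * Γ + L * Γ ^ 2) * d) * (Γ - 1) :=
        mnorm_mul3_le hMinv' hMdiff (hKn t ht) zero_le_one hNb0
      have := scalar_S2 hΓ hL1 hd0
      linarith
    have hκ0 : (0 : ℝ) ≤ (L + 2) * Γ ^ 3 * d := by
      exact mul_nonneg (mul_nonneg (by linarith) (by positivity)) hd0.le
    have hKVb : ‖K' t - K t‖ ≤ V * d := le_trans hKb (scalar_S2b hΓ hL1 hVdef hd0)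
    -- S = A + B K facts
    have hSn : ‖A + B * K t‖ ≤ Γ ^ 2 := by
      have h1 : ‖B * K t‖ ≤ (Γ - 1) * (Γ - 1) :=
        le_trans (Matrix.l2_opNorm_mul _ _)
          (mul_le_mul hBn (hKn t ht) (norm_nonneg _) hg0)
      refine le_trans (norm_add_le _ _) ?_
      have := scalar_S0 hΓ
      linarith
    have hK'n : ‖K' t‖ ≤ (Γ - 1) + (L + 2) * Γ ^ 3 * d := norm_add_diff_le (hKn t ht) hKb
    have hSd : ‖A' + B' * K' t - (A + B * K t)‖ ≤ V * Γ * d := by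
      rw [show A' + B' * K' t - (A + B * K t)
          = (A' - A) + ((B' - B) * K' t + B * (K' t - K t)) from by
        rw [Matrix.sub_mul, Matrix.mul_sub]; abel]
      have u1 : ‖A' - A‖ ≤ d := le_trans hAdiff hεd
      have u2 : ‖(B' - B) * K' t‖ ≤ d * ((Γ - 1) + (L + 2) * Γ ^ 3 * d) :=
        le_trans (Matrix.l2_opNorm_mul _ _)
          (mul_le_mul (le_trans hBdiff hεd) hK'n (norm_nonneg _) hd0.le)
      have u3 : ‖B * (K' t - K t)‖ ≤ (Γ - 1) * ((L + 2) * Γ ^ 3 * d) :=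
        le_trans (Matrix.l2_opNorm_mul _ _)
          (mul_le_mul hBn hKb (norm_nonneg _) hg0)
      refine le_trans (le_trans (norm_add_le _ _) (add_le_add_right (norm_add_le _ _) _)) ?_
      have := scalar_S3 hΓ hL1 hVdef hd0 hd1
      linarith
    have hS'n : ‖A' + B' * K' t‖ ≤ 2 * V * Γ :=
      le_trans (norm_add_diff_le hSn hSd) (scalar_S4 hΓ hL1 hVdef hd0 hd1)
    -- positive semidefiniteness at t
    have hPpsd : (P t).PosSemidef := by
      rw [hP t ht]
      exact (hQ.add (psd_conj hRpd.posSemidef (K t))).add (psd_conj hTpsd (A + B * K t))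
    have hPpsd' : (P' t).PosSemidef := by
      rw [hP' t ht]
      exact (hQ.add (psd_conj hRpd.posSemidef (K' t))).add (psd_conj hTpsd' (A' + B' * K' t))
    -- P difference
    have hVT0 : (0 : ℝ) ≤ V * Γ * d := by positivity
    have hPd : ‖P' t - P t‖ ≤ (10 * V ^ 2 * L * Γ ^ 4) * d := by
      have hPdEq : P' t - P t
          = ((K' t)ᵀ * R * K' t - (K t)ᵀ * R * K t)
            + ((A' + B' * K' t)ᵀ * Ptil' (t + 1) * (A' + B' * K' t)
              - (A + B * K t)ᵀ * Ptil (t + 1) * (A + B * K t)) := by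
        rw [hP t ht, hP' t ht]; abel
      rw [hPdEq, triple_diff (K t) (K' t) R R (K t) (K' t),
        triple_diff (A + B * K t) (A' + B' * K' t) (Ptil (t + 1)) (Ptil' (t + 1))
          (A + B * K t) (A' + B' * K' t)]
      rw [show (K t)ᵀ * (R - R) * K' t = 0 from by
        rw [sub_self, Matrix.mul_zero, Matrix.zero_mul], add_zero]
      have u1 : ‖(K' t - K t)ᵀ * R * K' t‖
          ≤ ((L + 2) * Γ ^ 3 * d) * (Γ - 1) * ((Γ - 1) + (L + 2) * Γ ^ 3 * d) :=
        mnorm_mul3_le (by rw [mnorm_transpose]; exact hKb) hRn hK'n hκ0 hg0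
      have u2 : ‖(K t)ᵀ * R * (K' t - K t)‖
          ≤ (Γ - 1) * (Γ - 1) * ((L + 2) * Γ ^ 3 * d) :=
        mnorm_mul3_le (by rw [mnorm_transpose]; exact hKn t ht) hRn hKb hg0 hg0
      have u3 : ‖(A' + B' * K' t - (A + B * K t))ᵀ * Ptil' (t + 1) * (A' + B' * K' t)‖
          ≤ (V * Γ * d) * ((Γ - 1) + L * d) * (2 * V * Γ) :=
        mnorm_mul3_le (by rw [mnorm_transpose]; exact hSd) hTn' hS'n hVT0 hTn'0
      have u4 : ‖(A + B * K t)ᵀ * (Ptil' (t + 1) - Ptil (t + 1)) * (A' + B' * K' t)‖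
          ≤ Γ ^ 2 * (L * d) * (2 * V * Γ) :=
        mnorm_mul3_le (by rw [mnorm_transpose]; exact hSn) hTdiff hS'n (by positivity) hLd0
      have u5 : ‖(A + B * K t)ᵀ * Ptil (t + 1) * (A' + B' * K' t - (A + B * K t))‖
          ≤ Γ ^ 2 * (Γ - 1) * (V * Γ * d) :=
        mnorm_mul3_le (by rw [mnorm_transpose]; exact hSn) hTn hSd (by positivity) hg0
      have hsum := scalar_S5 hΓ hL1 hVdef hd0 hd1
      refine le_trans (norm_add_le _ _) ?_
      have b1 : ‖(K' t - K t)ᵀ * R * K' t + (K t)ᵀ * R * (K' t - K t)‖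
          ≤ ((L + 2) * Γ ^ 3 * d) * (Γ - 1) * ((Γ - 1) + (L + 2) * Γ ^ 3 * d)
            + (Γ - 1) * (Γ - 1) * ((L + 2) * Γ ^ 3 * d) :=
        le_trans (norm_add_le _ _) (add_le_add u1 u2)
      have b2 : ‖(A' + B' * K' t - (A + B * K t))ᵀ * Ptil' (t + 1) * (A' + B' * K' t)
          + (A + B * K t)ᵀ * (Ptil' (t + 1) - Ptil (t + 1)) * (A' + B' * K' t)
          + (A + B * K t)ᵀ * Ptil (t + 1) * (A' + B' * K' t - (A + B * K t))‖
          ≤ (V * Γ * d) * ((Γ - 1) + L * d) * (2 * V * Γ)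
            + Γ ^ 2 * (L * d) * (2 * V * Γ) + Γ ^ 2 * (Γ - 1) * (V * Γ * d) :=
        le_trans (norm_add_le _ _)
          (add_le_add (le_trans (norm_add_le _ _) (add_le_add u3 u4)) u5)
      linarith
    exact ⟨hPpsd, hPpsd', hKVb, hPd⟩
  -- backward induction
  have main : ∀ k : ℕ, k ≤ T →
      (P (T - k)).PosSemidef ∧ (P' (T - k)).PosSemidef ∧
        ‖P' (T - k) - P (T - k)‖ ≤ (10 * V ^ 2 * L * Γ ^ 4) ^ k * ε := by
    intro k
    induction k with
    | zero =>
      intro _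
      refine ⟨by rw [Nat.sub_zero, hPT]; exact hQT, by rw [Nat.sub_zero, hPT']; exact hQT, ?_⟩
      rw [Nat.sub_zero, hPT, hPT', sub_self, pow_zero, one_mul]
      simpa using hε.le
    | succ k ih =>
      intro hk1
      obtain ⟨h1, h2, h3⟩ := ih (by omega)
      have hsucc : T - (k + 1) + 1 = T - k := by omega
      have htlt : T - (k + 1) < T := by omega
      have hdd1 : (10 * V ^ 2 * L * Γ ^ 4) ^ k * ε ≤ 1 := by
        have hpow : (10 * V ^ 2 * L * Γ ^ 4) ^ k ≤ (10 * V ^ 2 * L * Γ ^ 4) ^ T :=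
          pow_le_pow_right₀ hC1 (by omega)
        nlinarith
      have hdd2 : ε ≤ (10 * V ^ 2 * L * Γ ^ 4) ^ k * ε :=
        le_mul_of_one_le_left hε.le (one_le_pow₀ hC1)
      rw [← hsucc] at h1 h2 h3
      obtain ⟨g1, g2, _, g4⟩ := step (T - (k + 1)) htlt ((10 * V ^ 2 * L * Γ ^ 4) ^ k * ε)
        hdd2 hdd1 h1 h2 h3
      refine ⟨g1, g2, ?_⟩
      calc ‖P' (T - (k + 1)) - P (T - (k + 1))‖
          ≤ (10 * V ^ 2 * L * Γ ^ 4) * ((10 * V ^ 2 * L * Γ ^ 4) ^ k * ε) := g4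
        _ = (10 * V ^ 2 * L * Γ ^ 4) ^ (k + 1) * ε := by ring
  intro t ht
  obtain ⟨h1, h2, h3⟩ := main (T - (t + 1)) (by omega)
  rw [show T - (T - (t + 1)) = t + 1 from by omega] at h1 h2 h3
  have hd1 : (10 * V ^ 2 * L * Γ ^ 4) ^ (T - (t + 1)) * ε ≤ 1 := by
    have hpow : (10 * V ^ 2 * L * Γ ^ 4) ^ (T - (t + 1)) ≤ (10 * V ^ 2 * L * Γ ^ 4) ^ T :=
      pow_le_pow_right₀ hC1 (by omega)
    nlinarith
  have hd2 : ε ≤ (10 * V ^ 2 * L * Γ ^ 4) ^ (T - (t + 1)) * ε :=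
    le_mul_of_one_le_left hε.le (one_le_pow₀ hC1)
  obtain ⟨_, _, g3, g4⟩ := step t ht ((10 * V ^ 2 * L * Γ ^ 4) ^ (T - (t + 1)) * ε)
    hd2 hd1 h1 h2 h3
  constructor
  · calc ‖K' t - K t‖ ≤ V * ((10 * V ^ 2 * L * Γ ^ 4) ^ (T - (t + 1)) * ε) := g3
      _ = (10 * V ^ 2 * L * Γ ^ 4) ^ (T - t - 1) * V * ε := by
        rw [show T - (t + 1) = T - t - 1 from by omega]; ring
  · calc ‖P' t - P t‖
        ≤ (10 * V ^ 2 * L * Γ ^ 4) * ((10 * V ^ 2 * L * Γ ^ 4) ^ (T - (t + 1)) * ε) := g4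
      _ = (10 * V ^ 2 * L * Γ ^ 4) ^ (T - t) * ε := by
        rw [show T - t = T - (t + 1) + 1 from by omega, pow_succ]; ring
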